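/- In the tensor power M₂^{⊗s} of the 2-dimensional irreducible U_q(sl₂)-module, for 0 ≤ k ≤ s the vector θ_k^(s) = F^k.(e₀ ⊗ ··· ⊗ e₀) equals q^{binomial(k,2)} [k]_q! times the sum over all subsets 1 ≤ r₁ < ··· < r_k ≤ s of q^{∑_{i=1}^k (1 - r_i)} · (e_{l₁} ⊗ ··· ⊗ e_{l_s}), where l_i = 1 if i ∈ {r₁,...,r_k} and l_i = 0 otherwise. -/

import Mathlib

noncomputable section
open Finset

/-- `q` is a nonzero complex number that is not a root of unity. -/
def NotRootOfUnity (q : ℂ) : Prop := q ≠ 0 ∧ ∀ m : ℤ, m ≠ 0 → q ^ m ≠ 1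

/-- The q-integer `[m]_q = (q^m - q^(-m))/(q - q⁻¹)`. -/
def qint (q : ℂ) (m : ℤ) : ℂ := (q ^ m - q ^ (-m)) / (q - q⁻¹)

/-- The q-factorial `[n]_q! = ∏_{m=1}^n [m]_q`. -/
def qfact (q : ℂ) (n : ℕ) : ℂ := ∏ m ∈ Finset.range n, qint q ((m : ℤ) + 1)

/-- Coefficient model of the tensor power `M₂^{⊗s}` of the two-dimensional irreducible
`U_q(sl₂)`-module: a vector is the coefficient function of the basis
`e_{l₁} ⊗ ⋯ ⊗ e_{l_s}` (index `0` is the leftmost tensorand). -/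
abbrev V (s : ℕ) := (Fin s → Fin 2) → ℂ

/-- The highest weight vector `e₀ ⊗ ⋯ ⊗ e₀` of `M₂^{⊗s}`. -/
def e0 (s : ℕ) : V s := fun m => if ∀ i, m i = 0 then 1 else 0

/-- Action of `F` on `M₂^{⊗s}` via `Δ^(s)(F) = ∑ᵢ (K⁻¹)^{⊗(i-1)} ⊗ F ⊗ 1^{⊗(s-i)}`
(the first coproduct leg acts on the leftmost tensorand;
`F.e₀ = e₁`, `F.e₁ = 0`, `K⁻¹.e_l = q^{2l-1} e_l` in `M₂`). -/
def Fop (q : ℂ) (s : ℕ) (v : V s) : V s :=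
  fun m => ∑ i : Fin s,
    (∏ j : Fin s, if j < i then q ^ (2 * ((m j : ℕ) : ℤ) - 1) else 1) *
      (if m i = 1 then v (Function.update m i 0) else 0)

/-- Action of `E` on `M₂^{⊗s}` via `Δ^(s)(E) = ∑ᵢ 1^{⊗(i-1)} ⊗ E ⊗ K^{⊗(s-i)}`
(`E.e₁ = e₀`, `E.e₀ = 0`, `K.e_l = q^{1-2l} e_l` in `M₂`). -/
def Eop (q : ℂ) (s : ℕ) (v : V s) : V s :=
  fun m => ∑ i : Fin s,
    (∏ j : Fin s, if i < j then q ^ (1 - 2 * ((m j : ℕ) : ℤ)) else 1) *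
      (if m i = 0 then v (Function.update m i 1) else 0)

/-- Action of `K` on `M₂^{⊗s}` (diagonal: `K.e_l = q^{1-2l} e_l` in each tensorand). -/
def Kop (q : ℂ) (s : ℕ) (v : V s) : V s :=
  fun m => (∏ j : Fin s, q ^ (1 - 2 * ((m j : ℕ) : ℤ))) * v m

/-- The vector `θ_k^(s) = F^k.(e₀ ⊗ ⋯ ⊗ e₀)` in `M₂^{⊗s}`. -/
def theta (q : ℂ) (s k : ℕ) : V s := (Fop q s)^[k] (e0 s)

/-! ### Auxiliary definitions and lemmas for the proof -/

def supp {s : ℕ} (m : Fin s → Fin 2) : Finset (Fin s) := univ.filter (fun j => m j = 1)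
def wgt {s : ℕ} (A : Finset (Fin s)) : ℤ := ∑ i ∈ A, (1 - ((i : ℕ) + 1) : ℤ)
def rhs (q : ℂ) (s k : ℕ) : V s := fun m =>
  q ^ (Nat.choose k 2) * qfact q k *
    (if (supp m).card = k then q ^ (wgt (supp m)) else 0)

lemma zpow_sum₀ {q : ℂ} (hq : q ≠ 0) {ι : Type*} (T : Finset ι) (f : ι → ℤ) :
    ∏ j ∈ T, q ^ f j = q ^ (∑ j ∈ T, f j) := by
  induction T using Finset.cons_induction with
  | empty => simp
  | cons a T ha ih => simp [Finset.prod_cons, Finset.sum_cons, zpow_add₀ hq, ih]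

lemma sum_rank_pow {α : Type*} [LinearOrder α] [DecidableEq α] (x : ℂ) (S : Finset α) :
    ∑ i ∈ S, x ^ (S.filter (· < i)).card = ∑ t ∈ range S.card, x ^ t := by
  induction S using Finset.induction_on_max with
  | empty => simp
  | insert a S ha ih =>
      have haS : a ∉ S := fun h => lt_irrefl a (ha a h)
      rw [Finset.sum_insert haS, Finset.card_insert_of_notMem haS, Finset.range_add_one,
        Finset.sum_insert (by simp)]
      congr 1
      · congr 1
        have : (insert a S).filter (· < a) = S := by
          ext j; simp only [Finset.mem_filter, Finset.mem_insert]
          constructor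
          · rintro ⟨h1 | h1, h2⟩ <;> simp_all
          · intro h; exact ⟨Or.inr h, ha j h⟩
        rw [this]
      · rw [← ih]
        apply Finset.sum_congr rfl
        intro i hi
        congr 2
        ext j; simp only [Finset.mem_filter, Finset.mem_insert]
        constructor
        · rintro ⟨h1 | h1, h2⟩
          · subst h1; exact absurd h2 (not_lt.mpr (ha i hi).le)
          · exact ⟨h1, h2⟩
        · rintro ⟨h1, h2⟩; exact ⟨Or.inr h1, h2⟩

lemma geom_key {q : ℂ} (hq : NotRootOfUnity q) (k : ℕ) :
    q ^ k * qint q ((k : ℤ) + 1) = ∑ t ∈ Finset.range (k + 1), (q ^ 2) ^ t := by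
  have h0 := hq.1
  have h2 : q ^ 2 ≠ 1 := by
    have := hq.2 2 (by norm_num)
    rwa [show ((2 : ℤ)) = ((2 : ℕ) : ℤ) by norm_num, zpow_natCast] at this
  have hsub : q - q⁻¹ ≠ 0 := by
    intro h
    apply h2
    rw [sub_eq_zero] at h
    rw [sq]
    nth_rewrite 1 [h]
    exact inv_mul_cancel₀ h0
  have h21 : q ^ 2 - 1 ≠ 0 := sub_ne_zero.mpr h2
  rw [geom_sum_eq h2, qint,
    show ((k : ℤ) + 1) = ((k + 1 : ℕ) : ℤ) by push_cast; ring,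
    zpow_neg, zpow_natCast]
  rw [mul_div_assoc', div_eq_div_iff hsub h21]
  field_simp
  ring

lemma supp_update {s : ℕ} (m : Fin s → Fin 2) (i : Fin s) :
    supp (Function.update m i 0) = (supp m).erase i := by
  ext j
  simp only [supp, Finset.mem_erase, Finset.mem_filter, Finset.mem_univ, true_and,
    Function.update_apply]
  by_cases h : j = i <;> simp [h]

lemma mem_supp_iff {s : ℕ} (m : Fin s → Fin 2) (i : Fin s) : i ∈ supp m ↔ m i = 1 := by
  simp [supp]

lemma Fop_rhs {q : ℂ} (hq : NotRootOfUnity q) (s k : ℕ) :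
    Fop q s (rhs q s k) = rhs q s (k + 1) := by
  have h0 := hq.1
  funext m
  set S : Finset (Fin s) := supp m with hS
  show (∑ i : Fin s,
      (∏ j : Fin s, if j < i then q ^ (2 * ((m j : ℕ) : ℤ) - 1) else 1) *
        (if m i = 1 then rhs q s k (Function.update m i 0) else 0)) = _
  by_cases hcard : S.card = k + 1
  · -- main case
    have hterm : ∀ i ∈ S,
        (∏ j : Fin s, if j < i then q ^ (2 * ((m j : ℕ) : ℤ) - 1) else 1) *
          rhs q s k (Function.update m i 0)
        = q ^ (Nat.choose k 2) * qfact q k * q ^ (wgt S) *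
            (q ^ 2) ^ (S.filter (· < i)).card := by
      intro i hi
      have hprod : (∏ j : Fin s, if j < i then q ^ (2 * ((m j : ℕ) : ℤ) - 1) else 1)
          = q ^ (2 * ((S.filter (· < i)).card : ℤ) - ((i : ℕ) : ℤ)) := by
        rw [← Finset.prod_filter, zpow_sum₀ h0]
        congr 1
        rw [Finset.sum_sub_distrib, ← Finset.mul_sum, Finset.sum_const, nsmul_eq_mul, mul_one]
        have hIio : (univ.filter (fun j => j < i)) = Finset.Iio i := by ext j; simp
        have hcardIio : (univ.filter (fun j => j < i)).card = (i : ℕ) := by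
          rw [hIio, Fin.card_Iio]
        have hsum1 : (∑ j ∈ univ.filter (fun j => j < i), ((m j : ℕ) : ℤ))
            = ((S.filter (· < i)).card : ℤ) := by
          have hval : ∀ j : Fin s, ((m j : ℕ) : ℤ) = if m j = 1 then 1 else 0 := by
            have : ∀ x : Fin 2, ((x : ℕ) : ℤ) = if x = 1 then 1 else 0 := by decide
            exact fun j => this (m j)
          simp_rw [hval]
          rw [Finset.sum_boole, Finset.filter_filter]
          congr 2
          rw [hS]
          unfold supp
          rw [Finset.filter_filter]
          congr 1
          ext j
          exact and_comm
        rw [hsum1, hcardIio]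
      have herase : (S.erase i).card = k := by
        rw [Finset.card_erase_of_mem hi, hcard]; rfl
      have hwgt : wgt (S.erase i) = wgt S + ((i : ℕ) : ℤ) := by
        have h := Finset.sum_erase_add S (fun j : Fin s => (1 - ((j : ℕ) + 1) : ℤ)) hi
        unfold wgt
        rw [← h]
        ring
      rw [show rhs q s k (Function.update m i 0)
            = q ^ (Nat.choose k 2) * qfact q k * q ^ (wgt (S.erase i)) by
          unfold rhs
          rw [supp_update, ← hS, herase, if_pos rfl]]
      rw [hprod, hwgt, zpow_sub₀ h0, zpow_add₀ h0,
        show (2 * ((S.filter (· < i)).card : ℤ))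
            = (((2 * (S.filter (· < i)).card : ℕ)) : ℤ) by push_cast; ring,
        zpow_natCast, zpow_natCast, pow_mul]
      field_simp
    have hsplit : (∑ i : Fin s,
        (∏ j : Fin s, if j < i then q ^ (2 * ((m j : ℕ) : ℤ) - 1) else 1) *
          (if m i = 1 then rhs q s k (Function.update m i 0) else 0))
        = ∑ i ∈ S,
          (∏ j : Fin s, if j < i then q ^ (2 * ((m j : ℕ) : ℤ) - 1) else 1) *
            rhs q s k (Function.update m i 0) := by
      have hcond : ∀ i : Fin s,
          (if m i = 1 then rhs q s k (Function.update m i 0) else 0)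
          = if i ∈ S then rhs q s k (Function.update m i 0) else 0 := by
        intro i
        exact if_congr ((mem_supp_iff m i).symm) rfl rfl
      simp_rw [hcond, mul_ite, mul_zero]
      rw [Finset.sum_ite_mem, Finset.univ_inter]
    rw [hsplit, Finset.sum_congr rfl hterm, ← Finset.mul_sum, sum_rank_pow, hcard,
      ← geom_key hq k]
    unfold rhs
    rw [← hS, if_pos hcard,
      show Nat.choose (k + 1) 2 = Nat.choose k 2 + k by
        rw [Nat.choose_succ_succ, Nat.choose_one_right, Nat.add_comm],
      show qfact q (k + 1) = qfact q k * qint q ((k : ℤ) + 1) by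
        unfold qfact; rw [Finset.prod_range_succ],
      pow_add]
    ring
  · -- degenerate case : both sides vanish
    have hz : ∀ i : Fin s,
        (∏ j : Fin s, if j < i then q ^ (2 * ((m j : ℕ) : ℤ) - 1) else 1) *
          (if m i = 1 then rhs q s k (Function.update m i 0) else 0) = 0 := by
      intro i
      by_cases hmi : m i = 1
      · rw [if_pos hmi]
        have hi : i ∈ S := (mem_supp_iff m i).mpr hmi
        have herase : (S.erase i).card ≠ k := by
          rw [Finset.card_erase_of_mem hi]
          have : 1 ≤ S.card := Finset.card_pos.mpr ⟨i, hi⟩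
          omega
        have : rhs q s k (Function.update m i 0) = 0 := by
          unfold rhs
          rw [supp_update, ← hS, if_neg herase, mul_zero]
        rw [this, mul_zero]
      · rw [if_neg hmi, mul_zero]
    rw [Finset.sum_congr rfl (fun i _ => hz i), Finset.sum_const, smul_zero]
    unfold rhs
    rw [← hS, if_neg hcard, mul_zero]

lemma theta_eq_rhs {q : ℂ} (hq : NotRootOfUnity q) (s k : ℕ) :
    theta q s k = rhs q s k := by
  induction k with
  | zero =>
      funext m
      show e0 s m = _
      unfold e0 rhs qfact
      have hfin : ∀ x : Fin 2, x = 0 ↔ ¬ x = 1 := by decide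
      have hiff : (∀ i, m i = 0) ↔ (supp m).card = 0 := by
        rw [Finset.card_eq_zero, Finset.eq_empty_iff_forall_notMem]
        constructor
        · intro h i hi
          rw [mem_supp_iff] at hi
          exact (hfin (m i)).mp (h i) hi
        · intro h i
          exact (hfin (m i)).mpr (fun h1 => h i ((mem_supp_iff m i).mpr h1))
      simp only [Finset.range_zero, Finset.prod_empty, pow_zero, one_mul, mul_one]
      by_cases h : ∀ i, m i = 0
      · rw [if_pos h, if_pos (hiff.mp h)]
        have hemp : supp m = ∅ := Finset.card_eq_zero.mp (hiff.mp h)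
        rw [hemp]
        simp [wgt]
      · rw [if_neg h, if_neg (fun hc => h (hiff.mpr hc)), mul_zero]
  | succ k ih =>
      have hstep : theta q s (k + 1) = Fop q s (theta q s k) := by
        unfold theta
        rw [Function.iterate_succ', Function.comp_apply]
      rw [hstep, ih, Fop_rhs hq]
/-- Explicit expansion of `θ_k^(s) = F^k.(e₀^{⊗s})` in the standard basis:
`θ_k^(s) = q^{C(k,2)} [k]_q! ∑_{1 ≤ r₁ < ⋯ < r_k ≤ s} q^{∑ᵢ(1-rᵢ)} e_{l₁} ⊗ ⋯ ⊗ e_{l_s}`,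
where `l_i = 1` iff `i ∈ {r₁,…,r_k}` (a subset `A` of positions, `r = (i:ℕ)+1` being
the 1-indexed position). -/
theorem theta_expansion (q : ℂ) (hq : NotRootOfUnity q) (s k : ℕ) (hk : k ≤ s) :
    theta q s k = fun m =>
      q ^ (Nat.choose k 2) * qfact q k *
        ∑ A ∈ Finset.powersetCard k (Finset.univ : Finset (Fin s)),
          q ^ (∑ i ∈ A, (1 - ((i : ℕ) + 1) : ℤ)) *
            (if ∀ i : Fin s, (m i = 1 ↔ i ∈ A) then 1 else 0) := by
  rw [theta_eq_rhs hq]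
  funext m
  unfold rhs
  congr 1
  have hcond : ∀ A : Finset (Fin s), (∀ i : Fin s, (m i = 1 ↔ i ∈ A)) ↔ A = supp m := by
    intro A
    rw [Finset.ext_iff]
    constructor
    · intro h i; rw [mem_supp_iff, ← h i]
    · intro h i; rw [h i, mem_supp_iff]
  calc (if (supp m).card = k then q ^ wgt (supp m) else 0)
      = if supp m ∈ Finset.powersetCard k (Finset.univ : Finset (Fin s))
          then q ^ wgt (supp m) else 0 := by
        congr 1
        simp [Finset.mem_powersetCard_univ]
    _ = ∑ A ∈ Finset.powersetCard k (Finset.univ : Finset (Fin s)),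
          if A = supp m then q ^ wgt A else 0 := by
        rw [Finset.sum_ite_eq' (Finset.powersetCard k univ) (supp m) (fun A => q ^ wgt A)]
    _ = _ := by
        apply Finset.sum_congr rfl
        intro A _
        rw [mul_ite, mul_one, mul_zero]
        congr 1
        exact propext ((hcond A)).symm
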